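/- The join of a (p)-sphere graph and a (q)-sphere graph in the sense of Evako is a (p+q+1)-sphere graph. In particular, the join of the 0-sphere (two isolated vertices) with a d-sphere is a (d+1)-sphere (the suspension). -/

import Mathlib

universe u

/-- Fuel-indexed contractibility (Evako / Ivashchenko): a one-point graph is
contractible, and `G` is contractible if there is a vertex `x` whose unit sphere
(induced graph on the neighbors of `x`) is contractible and whose deletion leaves a
contractible graph.  The empty graph is not contractible. -/
def ContractibleFuel : ℕ → ∀ {V : Type u}, SimpleGraph V → Prop
  | 0, _, _ => False
  | n + 1, V, G =>
      (Nonempty V ∧ Subsingleton V) ∨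
      ∃ x : V, ContractibleFuel n (G.induce (G.neighborSet x)) ∧
        ContractibleFuel n (G.induce {y : V | y ≠ x})

/-- A graph is contractible if it is so with some amount of fuel. -/
def Contractible {V : Type u} (G : SimpleGraph V) : Prop :=
  ∃ n, ContractibleFuel n G

/-- Fuel-indexed Evako spheres, with dimension shifted by one: index `0` is the
`(-1)`-sphere (the empty graph); a graph has sphere index `s+1` (i.e. is an
`s`-sphere) if it is nonempty, every unit sphere has sphere index `s`, and removing
any single vertex yields a contractible graph. -/
def SphereFuel : ℕ → ℕ → ∀ {V : Type u}, SimpleGraph V → Prop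
  | 0, _, _, _ => False
  | _ + 1, 0, V, _ => IsEmpty V
  | n + 1, s + 1, V, G =>
      Nonempty V ∧
      (∀ x : V, SphereFuel n s (G.induce (G.neighborSet x))) ∧
      (∀ x : V, Contractible (G.induce {y : V | y ≠ x}))

/-- `G` is a `d`-sphere in the sense of Evako (for `d ≥ -1`). -/
def IsSphere (d : ℤ) {V : Type u} (G : SimpleGraph V) : Prop :=
  -1 ≤ d ∧ ∃ n, SphereFuel n (d + 1).toNat G

/-- The join of two graphs: the disjoint union together with all edges between the
two vertex sets. -/
def graphJoin {V W : Type u} (G : SimpleGraph V) (H : SimpleGraph W) :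
    SimpleGraph (V ⊕ W) where
  Adj a b :=
    match a, b with
    | Sum.inl v, Sum.inl v' => G.Adj v v'
    | Sum.inr w, Sum.inr w' => H.Adj w w'
    | Sum.inl _, Sum.inr _ => True
    | Sum.inr _, Sum.inl _ => True
  symm := by
    constructor; rintro (v | w) (v' | w') h <;> simp_all [SimpleGraph.adj_comm]
  loopless := by
    constructor; rintro (v | w) h <;> simp_all

open SimpleGraph

section Aux
variable {V W : Type u}

/-- Transport an isomorphism to induced subgraphs. -/
def induceIsoAux {G : SimpleGraph V} {H : SimpleGraph W} (e : G ≃g H)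
    (s : Set V) (t : Set W) (hst : ∀ v : V, v ∈ s ↔ (e v : W) ∈ t) :
    G.induce s ≃g H.induce t where
  toEquiv := e.toEquiv.subtypeEquiv hst
  map_rel_iff' := by
    intro a b
    exact e.map_adj_iff

theorem contractibleFuel_mono : ∀ {n m : ℕ}, n ≤ m →
    ∀ {V : Type u} {G : SimpleGraph V}, ContractibleFuel n G → ContractibleFuel m G := by
  intro n
  induction n with
  | zero => intro m _ V G h; exact h.elim
  | succ n ih =>
    intro m hm V G h
    obtain ⟨m, rfl⟩ : ∃ m', m = m' + 1 := ⟨m - 1, by omega⟩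
    rcases h with h | ⟨x, h1, h2⟩
    · exact Or.inl h
    · exact Or.inr ⟨x, ih (by omega) h1, ih (by omega) h2⟩

theorem contractibleFuel_iso : ∀ {n : ℕ} {V W : Type u} {G : SimpleGraph V}
    {H : SimpleGraph W}, (G ≃g H) → ContractibleFuel n G → ContractibleFuel n H := by
  intro n
  induction n with
  | zero => intro V W G H e h; exact h.elim
  | succ n ih =>
    intro V W G H e h
    rcases h with ⟨h1, h2⟩ | ⟨x, h1, h2⟩
    · exact Or.inl ⟨Nonempty.map e h1, e.toEquiv.symm.subsingleton⟩
    · refine Or.inr ⟨e x, ih (induceIsoAux e _ _ ?_) h1, ih (induceIsoAux e _ _ ?_) h2⟩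
      · intro v
        simp only [mem_neighborSet]
        exact e.map_adj_iff.symm
      · intro v
        simp only [Set.mem_setOf_eq]
        exact e.toEquiv.injective.ne_iff.symm
theorem contractible_iso {G : SimpleGraph V} {H : SimpleGraph W} (e : G ≃g H)
    (h : Contractible G) : Contractible H := by
  obtain ⟨n, hn⟩ := h; exact ⟨n, contractibleFuel_iso e hn⟩

theorem sphereFuel_mono : ∀ {n m : ℕ}, n ≤ m → ∀ {s : ℕ} {V : Type u} {G : SimpleGraph V},
    SphereFuel n s G → SphereFuel m s G := by
  intro n
  induction n with
  | zero => intro m _ s V G h; exact h.elim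
  | succ n ih =>
    intro m hm s V G h
    obtain ⟨m, rfl⟩ : ∃ m', m = m' + 1 := ⟨m - 1, by omega⟩
    cases s with
    | zero => exact h
    | succ s =>
      obtain ⟨h1, h2, h3⟩ := h
      exact ⟨h1, fun x => ih (by omega) (h2 x), h3⟩

theorem sphereFuel_iso : ∀ {n s : ℕ} {V W : Type u} {G : SimpleGraph V}
    {H : SimpleGraph W}, (G ≃g H) → SphereFuel n s G → SphereFuel n s H := by
  intro n
  induction n with
  | zero => intro s V W G H e h; exact h.elim
  | succ n ih =>
    intro s V W G H e h
    cases s with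
    | zero => haveI : IsEmpty V := h; exact e.toEquiv.symm.isEmpty
    | succ s =>
      obtain ⟨h1, h2, h3⟩ := h
      refine ⟨Nonempty.map e h1, fun x => ?_, fun x => ?_⟩
      · refine ih (induceIsoAux e _ _ ?_) (h2 (e.symm x))
        intro v
        simp only [mem_neighborSet]
        constructor
        · intro hv
          have := e.map_adj_iff (v := e.symm x) (w := v)
          rw [e.apply_symm_apply] at this
          exact this.mpr hv
        · intro hv
          have := e.map_adj_iff (v := e.symm x) (w := v)
          rw [e.apply_symm_apply] at this
          exact this.mp hv
      · refine contractible_iso (induceIsoAux e _ _ ?_) (h3 (e.symm x))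
        intro v
        simp only [Set.mem_setOf_eq]
        rw [← e.toEquiv.injective.ne_iff]
        simp

theorem finite_of_finite_ne {V : Type u} (x : V) (h : Finite {y : V // y ≠ x}) : Finite V := by
  have h1 : ({y : V | y ≠ x}).Finite := Set.finite_coe_iff.mp h
  have h2 : (Set.univ : Set V).Finite := by
    refine Set.Finite.subset (h1.union (Set.finite_singleton x)) ?_
    intro y _
    by_cases hy : y = x <;> simp [hy]
  exact Set.finite_univ_iff.mp h2

theorem contractibleFuel_finite : ∀ {n : ℕ} {V : Type u} {G : SimpleGraph V},
    ContractibleFuel n G → Finite V := by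
  intro n
  induction n with
  | zero => intro V G h; exact h.elim
  | succ n ih =>
    intro V G h
    rcases h with ⟨h1, h2⟩ | ⟨x, _, h2⟩
    · exact Finite.of_subsingleton
    · exact finite_of_finite_ne x (ih h2)

theorem contractible_finite {G : SimpleGraph V} (h : Contractible G) : Finite V := by
  obtain ⟨n, hn⟩ := h; exact contractibleFuel_finite hn

theorem sphereFuel_finite {n s : ℕ} {G : SimpleGraph V} (h : SphereFuel n s G) :
    Finite V := by
  cases n with
  | zero => exact h.elim
  | succ n =>
    cases s with
    | zero => haveI : IsEmpty V := h; exact Finite.of_subsingleton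
    | succ s =>
      obtain ⟨⟨x⟩, _, h3⟩ := h
      exact finite_of_finite_ne x (contractible_finite (h3 x))
variable {G : SimpleGraph V} {H : SimpleGraph W}

@[simp] theorem graphJoin_adj_inl_inl {v v' : V} :
    (graphJoin G H).Adj (Sum.inl v) (Sum.inl v') ↔ G.Adj v v' := Iff.rfl

@[simp] theorem graphJoin_adj_inr_inr {w w' : W} :
    (graphJoin G H).Adj (Sum.inr w) (Sum.inr w') ↔ H.Adj w w' := Iff.rfl

@[simp] theorem graphJoin_adj_inl_inr {v : V} {w : W} :
    (graphJoin G H).Adj (Sum.inl v) (Sum.inr w) := trivial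

@[simp] theorem graphJoin_adj_inr_inl {v : V} {w : W} :
    (graphJoin G H).Adj (Sum.inr w) (Sum.inl v) := trivial

/-- Join with an empty-vertex graph on the left. -/
def joinEmptyLeft [IsEmpty V] : graphJoin G H ≃g H where
  toEquiv := Equiv.emptySum V W
  map_rel_iff' := by
    rintro (v | w) (v' | w')
    · exact isEmptyElim v
    · exact isEmptyElim v
    · exact isEmptyElim v'
    · exact Iff.rfl

/-- Commutativity of the join. -/
def joinComm : graphJoin G H ≃g graphJoin H G where
  toEquiv := Equiv.sumComm V W
  map_rel_iff' := by
    rintro (v | w) (v' | w') <;> exact Iff.rfl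

/-- Unit sphere of a left vertex in the join. -/
def joinSphereInl (v : V) :
    (graphJoin G H).induce ((graphJoin G H).neighborSet (Sum.inl v)) ≃g
      graphJoin (G.induce (G.neighborSet v)) H where
  toEquiv :=
    { toFun := fun a => match a with
        | ⟨Sum.inl u, h⟩ => Sum.inl ⟨u, h⟩
        | ⟨Sum.inr w, _⟩ => Sum.inr w
      invFun := fun a => match a with
        | Sum.inl ⟨u, h⟩ => ⟨Sum.inl u, h⟩
        | Sum.inr w => ⟨Sum.inr w, trivial⟩
      left_inv := by rintro ⟨(u | w), h⟩ <;> rfl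
      right_inv := by rintro (⟨u, h⟩ | w) <;> rfl }
  map_rel_iff' := by
    rintro ⟨(u | w), h⟩ ⟨(u' | w'), h'⟩ <;> exact Iff.rfl

/-- Deleting a left vertex from the join. -/
def joinDelInl (v : V) :
    (graphJoin G H).induce {y : V ⊕ W | y ≠ Sum.inl v} ≃g
      graphJoin (G.induce {y : V | y ≠ v}) H where
  toEquiv :=
    { toFun := fun a => match a with
        | ⟨Sum.inl u, h⟩ => Sum.inl ⟨u, fun e => h (by rw [e])⟩
        | ⟨Sum.inr w, _⟩ => Sum.inr w
      invFun := fun a => match a with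
        | Sum.inl ⟨u, h⟩ => ⟨Sum.inl u, fun e => h (Sum.inl.inj e)⟩
        | Sum.inr w => ⟨Sum.inr w, Sum.inr_ne_inl⟩
      left_inv := by rintro ⟨(u | w), h⟩ <;> rfl
      right_inv := by rintro (⟨u, h⟩ | w) <;> rfl }
  map_rel_iff' := by
    rintro ⟨(u | w), h⟩ ⟨(u' | w'), h'⟩ <;> exact Iff.rfl
@[simp] theorem joinComm_inl (v : V) :
    (joinComm (G := G) (H := H)) (Sum.inl v) = Sum.inr v := rfl

@[simp] theorem joinComm_inr (w : W) :
    (joinComm (G := G) (H := H)) (Sum.inr w) = Sum.inl w := rfl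

/-- Unit sphere of a right vertex in the join. -/
def joinSphereInr (w : W) :
    (graphJoin G H).induce ((graphJoin G H).neighborSet (Sum.inr w)) ≃g
      graphJoin G (H.induce (H.neighborSet w)) :=
  ((induceIsoAux (joinComm (G := G) (H := H)) _
      ((graphJoin H G).neighborSet (Sum.inl w)) (by
        rintro (v | w') <;> simp [mem_neighborSet, Equiv.sumComm])).trans
    (joinSphereInl w)).trans joinComm

/-- Deleting a right vertex from the join. -/
def joinDelInr (w : W) :
    (graphJoin G H).induce {y : V ⊕ W | y ≠ Sum.inr w} ≃g
      graphJoin G (H.induce {y : W | y ≠ w}) :=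
  ((induceIsoAux (joinComm (G := G) (H := H)) _
      {y : W ⊕ V | y ≠ Sum.inl w} (by
        rintro (v | w') <;> simp [Equiv.sumComm])).trans
    (joinDelInl w)).trans joinComm

theorem card_lt_of_not_mem {V : Type u} [Finite V] {s : Set V} {x : V} (h : x ∉ s) :
    Nat.card s < Nat.card V := by
  rw [Nat.card_coe_set_eq, ← Set.ncard_univ]
  refine Set.ncard_lt_ncard ?_ Set.finite_univ
  rw [Set.ssubset_univ_iff]
  intro he
  exact h (he ▸ Set.mem_univ x)

/-- The join with a contractible graph is contractible. -/
theorem contractible_join : ∀ (k : ℕ) {V W : Type u} [Finite V]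
    (G : SimpleGraph V) (H : SimpleGraph W), Nat.card V ≤ k →
    Contractible H → Contractible (graphJoin G H) := by
  intro k
  induction k with
  | zero =>
    intro V W _ G H hcard hH
    haveI : IsEmpty V := by
      by_contra h
      rw [not_isEmpty_iff] at h
      have : 0 < Nat.card V := Nat.card_pos
      omega
    obtain ⟨n, hn⟩ := hH
    exact ⟨n, contractibleFuel_iso joinEmptyLeft.symm hn⟩
  | succ k ih =>
    intro V W _ G H hcard hH
    by_cases hV : Nonempty V
    · obtain ⟨x⟩ := hV
      obtain ⟨n1, h1⟩ := ih (G.induce (G.neighborSet x)) H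
        (by have := card_lt_of_not_mem (show x ∉ G.neighborSet x by simp); omega) hH
      obtain ⟨n2, h2⟩ := ih (G.induce {y : V | y ≠ x}) H
        (by have : x ∉ {y : V | y ≠ x} := by simp
            have := card_lt_of_not_mem this; omega) hH
      refine ⟨max n1 n2 + 1, Or.inr ⟨Sum.inl x, ?_, ?_⟩⟩
      · exact contractibleFuel_iso (joinSphereInl x).symm
          (contractibleFuel_mono (le_max_left _ _) h1)
      · exact contractibleFuel_iso (joinDelInl x).symm
          (contractibleFuel_mono (le_max_right _ _) h2)
    · haveI : IsEmpty V := not_nonempty_iff.mp hV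
      obtain ⟨n, hn⟩ := hH
      exact ⟨n, contractibleFuel_iso joinEmptyLeft.symm hn⟩
/-- Join with an empty-vertex graph on the right. -/
def joinEmptyRight [IsEmpty W] : graphJoin G H ≃g G :=
  (joinComm (G := G) (H := H)).trans joinEmptyLeft

theorem sphereFuel_join : ∀ (N : ℕ) {n m p q : ℕ} {V W : Type u}
    {G : SimpleGraph V} {H : SimpleGraph W}, n + m ≤ N →
    SphereFuel n p G → SphereFuel m q H →
    ∃ k, SphereFuel k (p + q) (graphJoin G H) := by
  intro N
  induction N with
  | zero =>
    intro n m p q V W G H hnm hG hH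
    obtain rfl : n = 0 := by omega
    exact hG.elim
  | succ N ih =>
    intro n m p q V W G H hnm hG hH
    cases n with
    | zero => exact hG.elim
    | succ n' =>
    cases m with
    | zero => exact hH.elim
    | succ m' =>
    cases p with
    | zero =>
      haveI : IsEmpty V := hG
      rw [Nat.zero_add]
      exact ⟨m' + 1, sphereFuel_iso joinEmptyLeft.symm hH⟩
    | succ s =>
    cases q with
    | zero =>
      haveI : IsEmpty W := hH
      exact ⟨n' + 1, sphereFuel_iso joinEmptyRight.symm hG⟩
    | succ t =>
      haveI : Finite V := sphereFuel_finite hG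
      haveI : Finite W := sphereFuel_finite hH
      haveI : Fintype (V ⊕ W) := Fintype.ofFinite _
      have hG' := hG
      have hH' := hH
      obtain ⟨hV, hGs, hGd⟩ := hG
      obtain ⟨hW, hHs, hHd⟩ := hH
      have hsp : ∀ x : V ⊕ W, ∃ k, SphereFuel k (s + 1 + t)
          ((graphJoin G H).induce ((graphJoin G H).neighborSet x)) := by
        rintro (v | w)
        · obtain ⟨k, hk⟩ := ih (n := n') (m := m' + 1) (by omega) (hGs v) hH'
          exact ⟨k, (show s + (t + 1) = s + 1 + t by omega) ▸
            sphereFuel_iso (joinSphereInl v).symm hk⟩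
        · obtain ⟨k, hk⟩ := ih (n := n' + 1) (m := m') (by omega) hG' (hHs w)
          exact ⟨k, sphereFuel_iso (joinSphereInr w).symm hk⟩
      choose f hf using hsp
      refine ⟨Finset.univ.sup f + 1, ⟨Sum.inl hV.some⟩, fun x =>
        sphereFuel_mono (Finset.le_sup (Finset.mem_univ x)) (hf x), ?_⟩
      rintro (v | w)
      · refine contractible_iso (joinDelInl v).symm ?_
        refine contractible_iso joinComm ?_
        exact contractible_join (Nat.card W) H _ le_rfl (hGd v)
      · refine contractible_iso (joinDelInr w).symm ?_
        exact contractible_join (Nat.card V) G _ le_rfl (hHd w)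
theorem stmt4 {V W : Type u} (G : SimpleGraph V) (H : SimpleGraph W)
    (p q : ℤ) (hG : IsSphere p G) (hH : IsSphere q H) :
    IsSphere (p + q + 1) (graphJoin G H) := by
  obtain ⟨hp, n, hn⟩ := hG
  obtain ⟨hq, m, hm⟩ := hH
  refine ⟨by omega, ?_⟩
  have h := sphereFuel_join (n + m) (le_refl (n + m)) hn hm
  have he : (p + q + 1 + 1).toNat = (p + 1).toNat + (q + 1).toNat := by omega
  rw [he]
  exact h
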